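/- The map gap : 𝒦(ℝ) → ℝ assigning to each nonempty compact set A the quantity gap(A) = min{ℓ ≥ 0 : A + [0,ℓ] is an interval} is continuous with respect to the Hausdorff metric. -/

import Mathlib

open Pointwise

/-- The length of the longest bounded interval complementary to `A`:
`gap A = min {ℓ ≥ 0 : A + [0,ℓ] is an interval}`. -/
noncomputable def gap (A : Set ℝ) : ℝ :=
  sInf {ℓ : ℝ | 0 ≤ ℓ ∧ (A + Set.Icc 0 ℓ).OrdConnected}

lemma gapSet_mem {A : Set ℝ} (hAc : IsCompact A) (hA : A.Nonempty) :
    (sSup A - sInf A) ∈ {ℓ : ℝ | 0 ≤ ℓ ∧ (A + Set.Icc 0 ℓ).OrdConnected} := by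
  have hbb := hAc.bddBelow
  have hba := hAc.bddAbove
  have hm : sInf A ∈ A := hAc.sInf_mem hA
  have hM : sSup A ∈ A := hAc.sSup_mem hA
  have h0 : 0 ≤ sSup A - sInf A := by
    have := csInf_le_csSup hA hbb hba; linarith
  refine ⟨h0, ?_⟩
  constructor
  rintro x hx y hy z hz
  simp only [Set.mem_add, Set.mem_Icc] at hx hy ⊢
  obtain ⟨a, ha, s, ⟨hs0, hs1⟩, rfl⟩ := hx
  obtain ⟨a', ha', s', ⟨hs0', hs1'⟩, rfl⟩ := hy
  obtain ⟨hz1, hz2⟩ := hz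
  have hia : sInf A ≤ a := csInf_le hbb ha
  have hsa' : a' ≤ sSup A := le_csSup hba ha'
  by_cases h : z ≤ sSup A
  · exact ⟨sInf A, hm, z - sInf A, ⟨by linarith, by linarith⟩, by ring⟩
  · push_neg at h
    exact ⟨sSup A, hM, z - sSup A, ⟨by linarith, by linarith⟩, by ring⟩

lemma key_lemma {A B : Set ℝ} {ε ℓ : ℝ} (hε : 0 ≤ ε) (hℓ : 0 ≤ ℓ)
    (h1 : ∀ b ∈ B, ∃ a ∈ A, |a - b| ≤ ε)
    (h2 : ∀ a ∈ A, ∃ b ∈ B, |a - b| ≤ ε)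
    (hord : (A + Set.Icc 0 ℓ).OrdConnected) :
    (B + Set.Icc 0 (ℓ + 2 * ε)).OrdConnected := by
  constructor
  rintro x hx y hy z hz
  simp only [Set.mem_add, Set.mem_Icc] at hx hy ⊢
  obtain ⟨b₁, hb₁, s₁, ⟨hs₁0, hs₁1⟩, rfl⟩ := hx
  obtain ⟨b₂, hb₂, s₂, ⟨hs₂0, hs₂1⟩, rfl⟩ := hy
  obtain ⟨hz1, hz2⟩ := hz
  by_cases hc1 : z ≤ b₁ + (ℓ + 2 * ε)
  · exact ⟨b₁, hb₁, z - b₁, ⟨by linarith, by linarith⟩, by ring⟩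
  by_cases hc2 : b₂ ≤ z
  · exact ⟨b₂, hb₂, z - b₂, ⟨by linarith, by linarith⟩, by ring⟩
  push_neg at hc1 hc2
  obtain ⟨a₁, ha₁, hd₁⟩ := h1 b₁ hb₁
  obtain ⟨a₂, ha₂, hd₂⟩ := h1 b₂ hb₂
  rw [abs_le] at hd₁ hd₂
  have hma : a₁ ∈ A + Set.Icc 0 ℓ := by
    simp only [Set.mem_add, Set.mem_Icc]
    exact ⟨a₁, ha₁, 0, ⟨le_refl 0, hℓ⟩, by ring⟩
  have hma' : a₂ ∈ A + Set.Icc 0 ℓ := by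
    simp only [Set.mem_add, Set.mem_Icc]
    exact ⟨a₂, ha₂, 0, ⟨le_refl 0, hℓ⟩, by ring⟩
  have hzmem : z - ε ∈ A + Set.Icc 0 ℓ := by
    apply hord.out hma hma'
    simp only [Set.mem_Icc]
    constructor <;> [skip; skip] <;> obtain ⟨l₁, r₁⟩ := hd₁ <;> obtain ⟨l₂, r₂⟩ := hd₂ <;> linarith
  simp only [Set.mem_add, Set.mem_Icc] at hzmem
  obtain ⟨a, ha, t, ⟨ht0, ht1⟩, hat⟩ := hzmem
  obtain ⟨b, hb, hd⟩ := h2 a ha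
  rw [abs_le] at hd
  obtain ⟨hdl, hdr⟩ := hd
  exact ⟨b, hb, z - b, ⟨by linarith, by linarith⟩, by ring⟩

lemma gap_le_gap {A B : Set ℝ} (hAc : IsCompact A) (hA : A.Nonempty) {δ : ℝ} (hδ : 0 ≤ δ)
    (h1 : ∀ b ∈ B, ∃ a ∈ A, |a - b| ≤ δ)
    (h2 : ∀ a ∈ A, ∃ b ∈ B, |a - b| ≤ δ) :
    gap B ≤ gap A + 2 * δ := by
  have hne : {ℓ : ℝ | 0 ≤ ℓ ∧ (A + Set.Icc 0 ℓ).OrdConnected}.Nonempty :=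
    ⟨_, gapSet_mem hAc hA⟩
  have hbB : BddBelow {ℓ : ℝ | 0 ≤ ℓ ∧ (B + Set.Icc 0 ℓ).OrdConnected} :=
    ⟨0, fun ℓ hℓ => hℓ.1⟩
  rw [gap, gap, ← sub_le_iff_le_add]
  apply le_csInf hne
  rintro ℓ ⟨hℓ0, hord⟩
  rw [sub_le_iff_le_add]
  exact csInf_le hbB ⟨by linarith, key_lemma hδ hℓ0 h1 h2 hord⟩

theorem gap_continuous :
    Continuous (fun A : TopologicalSpace.NonemptyCompacts ℝ => gap (A : Set ℝ)) := by
  rw [Metric.continuous_iff]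
  intro A ε hε
  refine ⟨ε / 4, by linarith, fun B hB => ?_⟩
  have hdist : Metric.hausdorffDist (B : Set ℝ) (A : Set ℝ) < ε / 4 := by
    rw [← Metric.NonemptyCompacts.dist_eq]; exact hB
  have hdist' : Metric.hausdorffDist (A : Set ℝ) (B : Set ℝ) < ε / 4 := by
    rwa [Metric.hausdorffDist_comm]
  have hfin : EMetric.hausdorffEdist (B : Set ℝ) (A : Set ℝ) ≠ ⊤ :=
    Metric.hausdorffEdist_ne_top_of_nonempty_of_bounded B.nonempty A.nonempty
      B.isCompact.isBounded A.isCompact.isBounded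
  have hfin' : EMetric.hausdorffEdist (A : Set ℝ) (B : Set ℝ) ≠ ⊤ := by
    unfold EMetric.hausdorffEdist at hfin ⊢; rwa [EMetric.hausdorffEdist_comm]
  have h1 : ∀ b ∈ (B : Set ℝ), ∃ a ∈ (A : Set ℝ), |a - b| ≤ ε / 4 := by
    intro b hb
    obtain ⟨a, ha, hlt⟩ := Metric.exists_dist_lt_of_hausdorffDist_lt hb hdist hfin
    exact ⟨a, ha, by rw [abs_sub_comm, ← Real.dist_eq]; linarith⟩
  have h2 : ∀ a ∈ (A : Set ℝ), ∃ b ∈ (B : Set ℝ), |a - b| ≤ ε / 4 := by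
    intro a ha
    obtain ⟨b, hb, hlt⟩ := Metric.exists_dist_lt_of_hausdorffDist_lt ha hdist' hfin'
    exact ⟨b, hb, by rw [← Real.dist_eq]; linarith⟩
  have hBA : gap (B : Set ℝ) ≤ gap (A : Set ℝ) + 2 * (ε / 4) :=
    gap_le_gap A.isCompact A.nonempty (by linarith) h1 h2
  have hAB : gap (A : Set ℝ) ≤ gap (B : Set ℝ) + 2 * (ε / 4) := by
    apply gap_le_gap B.isCompact B.nonempty (by linarith)
    · intro b hb; obtain ⟨a, ha, hab⟩ := h2 b hb
      exact ⟨a, ha, by rw [abs_sub_comm]; exact hab⟩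
    · intro a ha; obtain ⟨b, hb, hab⟩ := h1 a ha
      exact ⟨b, hb, by rw [abs_sub_comm]; exact hab⟩
  rw [Real.dist_eq, abs_lt]
  constructor <;> linarith
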